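/- Let p ∈ (0,1), a ∈ ℝ, a ≠ 0, and define g(t) = −t p a + ln(1 − p + p e^{t a}) for t ∈ ℝ. Then g(0) = 0, g′(0) = 0, and g″(t) ≤ a²/4 for all t ∈ ℝ. -/

import Mathlib

open Real

lemma bern_q_pos (p : ℝ) (hp : p ∈ Set.Ioo (0:ℝ) 1) (x : ℝ) :
    0 < 1 - p + p * Real.exp x := by
  have h1 : 0 < p := hp.1
  have h2 : p < 1 := hp.2
  have := Real.exp_pos x
  nlinarith

lemma bern_hasDerivAt (p a : ℝ) (hp : p ∈ Set.Ioo (0:ℝ) 1) (t : ℝ) :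
    HasDerivAt (fun t : ℝ => -t * p * a + Real.log (1 - p + p * Real.exp (t * a)))
      (-(p*a) + p * Real.exp (t*a) * a / (1 - p + p * Real.exp (t*a))) t := by
  have h1 : HasDerivAt (fun t : ℝ => t * a) a t := by
    simpa using (hasDerivAt_id t).mul_const a
  have h2 : HasDerivAt (fun t : ℝ => Real.exp (t*a)) (Real.exp (t*a) * a) t := h1.exp
  have h3 : HasDerivAt (fun t : ℝ => 1 - p + p * Real.exp (t*a))
      (p * (Real.exp (t*a) * a)) t := ((h2.const_mul p).const_add (1-p))
  have h4 : HasDerivAt (fun t : ℝ => Real.log (1 - p + p * Real.exp (t*a)))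
      (p * (Real.exp (t*a) * a) / (1 - p + p * Real.exp (t*a))) t :=
    h3.log (ne_of_gt (bern_q_pos p hp _))
  have h5 : HasDerivAt (fun t : ℝ => -t * p * a) (-(p*a)) t := by
    have h : (fun t : ℝ => -t * p * a) = fun t : ℝ => t * (-(p*a)) := by funext s; ring
    rw [h]
    simpa using (hasDerivAt_id t).mul_const (-(p*a))
  have := h5.add h4
  exact this.congr_deriv (by ring)

lemma bern_deriv_eq (p a : ℝ) (hp : p ∈ Set.Ioo (0:ℝ) 1) :
    deriv (fun t : ℝ => -t * p * a + Real.log (1 - p + p * Real.exp (t * a)))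
      = fun t => -(p*a) + p * Real.exp (t*a) * a / (1 - p + p * Real.exp (t*a)) := by
  funext t
  exact (bern_hasDerivAt p a hp t).deriv

theorem bernoulli_cgf_properties (p a : ℝ) (hp : p ∈ Set.Ioo (0 : ℝ) 1) (ha : a ≠ 0) :
    (fun t : ℝ => -t * p * a + Real.log (1 - p + p * Real.exp (t * a))) 0 = 0 ∧
    deriv (fun t : ℝ => -t * p * a + Real.log (1 - p + p * Real.exp (t * a))) 0 = 0 ∧
    ∀ t : ℝ, deriv (deriv
      (fun t : ℝ => -t * p * a + Real.log (1 - p + p * Real.exp (t * a)))) t ≤ a ^ 2 / 4 := by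
  have hp0 : 0 < p := hp.1
  have hp1 : p < 1 := hp.2
  refine ⟨by simp, ?_, ?_⟩
  · rw [bern_deriv_eq p a hp]
    have hq : (1 : ℝ) - p + p * Real.exp (0 * a) ≠ 0 := ne_of_gt (bern_q_pos p hp _)
    simp only [zero_mul, Real.exp_zero, mul_one]
    field_simp
    ring
  · intro t
    rw [bern_deriv_eq p a hp]
    set q := fun t : ℝ => 1 - p + p * Real.exp (t*a) with hqdef
    have hqpos : ∀ t, 0 < q t := fun t => bern_q_pos p hp _
    -- derivative of second term
    have h1 : HasDerivAt (fun t : ℝ => t * a) a t := by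
      simpa using (hasDerivAt_id t).mul_const a
    have h2 : HasDerivAt (fun t : ℝ => Real.exp (t*a)) (Real.exp (t*a) * a) t := h1.exp
    have hnum : HasDerivAt (fun t : ℝ => p * Real.exp (t*a) * a)
        (p * (Real.exp (t*a) * a) * a) t := by
      exact (h2.const_mul p).mul_const a
    have hden : HasDerivAt q (p * (Real.exp (t*a) * a)) t :=
      ((h2.const_mul p).const_add (1-p))
    have hdiv : HasDerivAt (fun t : ℝ => p * Real.exp (t*a) * a / q t)
        ((p * (Real.exp (t*a) * a) * a * q t - p * Real.exp (t*a) * a * (p * (Real.exp (t*a) * a))) / (q t)^2) t :=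
      hnum.div hden (ne_of_gt (hqpos t))
    have hfull : HasDerivAt (fun t : ℝ => -(p*a) + p * Real.exp (t*a) * a / q t)
        ((p * (Real.exp (t*a) * a) * a * q t - p * Real.exp (t*a) * a * (p * (Real.exp (t*a) * a))) / (q t)^2) t :=
      hdiv.const_add _
    rw [hfull.deriv]
    -- now the bound
    set x := Real.exp (t*a) with hx
    have hxpos : 0 < x := Real.exp_pos _
    have hq : q t = 1 - p + p * x := rfl
    rw [hq]
    have hqx : 0 < 1 - p + p * x := by nlinarith
    rw [div_le_div_iff₀ (by positivity) (by norm_num)]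
    have key : 4 * (p * (1-p) * x) ≤ (1 - p + p * x)^2 := by nlinarith [sq_nonneg ((1-p) - p*x)]
    nlinarith [sq_nonneg a, mul_le_mul_of_nonneg_left key (sq_nonneg a)]
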